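/- Let 𝕜 be a field, n ≥ 1, and let C be a class of functions [n] → [2]. Let S = 𝕜[x_{u,i} : u ∈ [n], i ∈ [2]] and S' = 𝕜[x_u : u ∈ [n]] (in Lean: MvPolynomial (Fin n × Fin 2) 𝕜 and MvPolynomial (Fin n) 𝕜), and let π : S → S' be the 𝕜-algebra homomorphism with π(x_{u,i}) = x_u (MvPolynomial.rename along the projection (u,i) ↦ u). Let I_C ⊆ S be the Stanley–Reisner ideal of C: the ideal generated by the squarefree monomials ∏_{(u,i) ∈ σ} x_{u,i} over all finite sets σ ⊆ [n] × [2] that are not contained in the graph of any member of C. Then for every subset U ⊆ [n]: C shatters U if and only if the monomial ∏_{u ∈ U} x_u does not belong to the image ideal Ideal.map π I_C. -/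
import Mathlib

open MvPolynomial

/-- `C` shatters `U`: every assignment of values on `U` is realized by a member of `C`. -/
def Shatters {n : ℕ} (C : Set (Fin n → Fin 2)) (U : Finset (Fin n)) : Prop :=
  ∀ g : Fin n → Fin 2, ∃ f ∈ C, ∀ u ∈ U, f u = g u

/-- The Stanley–Reisner ideal of the class `C`: the ideal generated by the squarefree
monomials `∏_{(u,i) ∈ σ} x_{u,i}` over all finite `σ ⊆ [n] × [2]` not contained in the
graph of any member of `C`. -/
noncomputable def SRIdeal (𝕜 : Type) [Field 𝕜] {n : ℕ} (C : Set (Fin n → Fin 2)) :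
    Ideal (MvPolynomial (Fin n × Fin 2) 𝕜) :=
  Ideal.span {P | ∃ σ : Finset (Fin n × Fin 2),
    (¬ ∃ f ∈ C, ∀ p ∈ σ, f p.1 = p.2) ∧ P = ∏ p ∈ σ, X p}

/-- `C` shatters `U ⊆ [n]` iff the monomial `∏_{u ∈ U} x_u` does not lie in the image
of the Stanley–Reisner ideal of `C` under the collapsing map `x_{u,i} ↦ x_u`. -/
theorem shatters_iff_not_mem_collapsed_SR_ideal (𝕜 : Type) [Field 𝕜] {n : ℕ} (hn : 1 ≤ n)
    (C : Set (Fin n → Fin 2)) (U : Finset (Fin n)) :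
    Shatters C U ↔
      (∏ u ∈ U, (X u : MvPolynomial (Fin n) 𝕜)) ∉
        Ideal.map (rename (Prod.fst : Fin n × Fin 2 → Fin n) : MvPolynomial (Fin n × Fin 2) 𝕜 →ₐ[𝕜] MvPolynomial (Fin n) 𝕜)
          (SRIdeal 𝕜 C) := by
  classical
  set eU : Fin n →₀ ℕ := ∑ u ∈ U, Finsupp.single u 1 with heU
  have hprod : (∏ u ∈ U, (X u : MvPolynomial (Fin n) 𝕜)) = monomial eU 1 := by
    rw [heU, monomial_sum_one]
    exact Finset.prod_congr rfl fun u _ => rfl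
  have key : ∀ σ : Finset (Fin n × Fin 2),
      (rename (Prod.fst : Fin n × Fin 2 → Fin n) : MvPolynomial (Fin n × Fin 2) 𝕜 →ₐ[𝕜] _)
        (∏ p ∈ σ, X p) = monomial (∑ p ∈ σ, Finsupp.single p.1 1) 1 := by
    intro σ
    rw [map_prod, monomial_sum_one]
    exact Finset.prod_congr rfl fun p _ => by rw [rename_X]; rfl
  have hmap : Ideal.map
      (rename (Prod.fst : Fin n × Fin 2 → Fin n) : MvPolynomial (Fin n × Fin 2) 𝕜 →ₐ[𝕜] _)
      (SRIdeal 𝕜 C) = Ideal.span ((fun d => monomial d (1:𝕜)) ''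
        {d : Fin n →₀ ℕ | ∃ σ : Finset (Fin n × Fin 2),
          (¬ ∃ f ∈ C, ∀ p ∈ σ, f p.1 = p.2) ∧ d = ∑ p ∈ σ, Finsupp.single p.1 1}) := by
    rw [SRIdeal, Ideal.map_span]
    congr 1
    ext P
    constructor
    · rintro ⟨Q, ⟨σ, hσ, rfl⟩, rfl⟩
      exact ⟨_, ⟨σ, hσ, rfl⟩, (key σ).symm⟩
    · rintro ⟨d, ⟨σ, hσ, rfl⟩, rfl⟩
      exact ⟨_, ⟨σ, hσ, rfl⟩, key σ⟩
  have hval : ∀ (σ : Finset (Fin n × Fin 2)) (u : Fin n),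
      (∑ p ∈ σ, Finsupp.single p.1 1) u = (σ.filter (fun p => p.1 = u)).card := by
    intro σ u
    rw [Finset.sum_apply', Finset.card_filter]
    exact Finset.sum_congr rfl fun p _ => by rw [Finsupp.single_apply]
  have heUval : ∀ u : Fin n, eU u = if u ∈ U then 1 else 0 := by
    intro u
    rw [heU, Finset.sum_apply']
    simp [Finsupp.single_apply]
  rw [hprod, hmap, mem_ideal_span_monomial_image]
  rw [support_monomial, if_neg (one_ne_zero (α := 𝕜))]
  simp only [Finset.mem_singleton, forall_eq, Set.mem_setOf_eq]
  constructor
  · -- Shatters → no non-face σ with dσ ≤ eU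
    rintro hsh ⟨d, ⟨σ, hσ, rfl⟩, hle⟩
    apply hσ
    have hcard : ∀ u : Fin n, (σ.filter (fun p => p.1 = u)).card ≤ 1 := by
      intro u
      have := hle u
      rw [hval σ u, heUval u] at this
      split_ifs at this with h
      · exact this
      · omega
    have hmemU : ∀ p ∈ σ, p.1 ∈ U := by
      intro p hp
      have h1 : 1 ≤ (σ.filter (fun q => q.1 = p.1)).card :=
        Finset.card_pos.mpr ⟨p, Finset.mem_filter.mpr ⟨hp, rfl⟩⟩
      have := hle p.1
      rw [hval σ p.1, heUval p.1] at this
      by_contra h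
      rw [if_neg h] at this
      omega
    set g : Fin n → Fin 2 := fun u =>
      if h : ∃ i, (u, i) ∈ σ then h.choose else 0 with hg
    have hgσ : ∀ p ∈ σ, g p.1 = p.2 := by
      rintro ⟨u, i⟩ hp
      have hex : ∃ j, (u, j) ∈ σ := ⟨i, hp⟩
      have hch : (u, hex.choose) ∈ σ := hex.choose_spec
      have hgu : g u = hex.choose := by rw [hg]; simp [hex]
      rw [hgu]
      have := Finset.card_le_one.mp (hcard u) (u, hex.choose)
        (Finset.mem_filter.mpr ⟨hch, rfl⟩) (u, i) (Finset.mem_filter.mpr ⟨hp, rfl⟩)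
      exact (Prod.mk.injEq _ _ _ _ ▸ this).2
    obtain ⟨f, hf, hfg⟩ := hsh g
    exact ⟨f, hf, fun p hp => by rw [hfg p.1 (hmemU p hp), hgσ p hp]⟩
  · -- no non-face σ with dσ ≤ eU → Shatters
    intro h g
    by_contra hcon
    push_neg at hcon
    have hinj : Set.InjOn (fun u => (u, g u)) U := fun a _ b _ hab =>
      (Prod.mk.injEq _ _ _ _ ▸ hab).1
    refine h ⟨eU, ⟨U.image (fun u => (u, g u)), ?_, ?_⟩, le_rfl⟩
    · rintro ⟨f, hf, hfa⟩
      obtain ⟨u, hu, hne⟩ := hcon f hf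
      exact hne (hfa (u, g u) (Finset.mem_image_of_mem _ hu))
    · rw [Finset.sum_image (fun a ha b hb hab => hinj ha hb hab), heU]
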